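/- Let f : ℝ → ℝ be continuous and 2π-periodic, with real Fourier coefficients, and suppose m ≤ f(φ) ≤ M for all φ. Then for every N and every ξ ∈ ℂ^{N+1} with ∑_{n=0}^N |ξ_n|² = 1, the value ∑_{m',n=0}^N c_{m'-n} ξ_n conj(ξ_{m'}) lies in the interval [m, M], where c_k are the Fourier coefficients of f. -/

import Mathlib

open Real Complex

/-- Orthogonality of exponentials on `[0, 2π]`. -/
lemma toeplitz_ortho (k : ℤ) :
    ∫ φ in (0:ℝ)..(2*π), Complex.exp ((k:ℂ) * Complex.I * φ)
      = if k = 0 then (2*π : ℂ) else 0 := by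
  rcases eq_or_ne k 0 with h | h
  · simp [h]
  · have hk : (k:ℂ) * Complex.I ≠ 0 := by
      simp [Complex.I_ne_zero, Complex.ext_iff, h]
    rw [if_neg h]
    rw [show (fun φ : ℝ => Complex.exp ((k:ℂ) * Complex.I * φ))
        = (fun φ : ℝ => Complex.exp (((k:ℂ) * Complex.I) * φ)) from rfl]
    rw [integral_exp_mul_complex hk]
    have h2 : (k:ℂ) * Complex.I * ((2*π : ℝ) : ℂ) = (k:ℂ) * (2 * (π:ℂ) * Complex.I) := by
      push_cast; ring
    rw [h2, Complex.exp_int_mul_two_pi_mul_I]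
    simp

noncomputable def Pfun (N : ℕ) (ξ : Fin (N+1) → ℂ) (φ : ℝ) : ℂ :=
  ∑ n : Fin (N+1), ξ n * Complex.exp (((n:ℕ):ℂ) * Complex.I * φ)

lemma Pfun_continuous (N : ℕ) (ξ : Fin (N+1) → ℂ) : Continuous (Pfun N ξ) := by
  unfold Pfun
  exact continuous_finset_sum _ fun n _ =>
    continuous_const.mul (Complex.continuous_exp.comp (by continuity))

lemma conj_exp_nat (a : ℕ) (φ : ℝ) :
    (starRingEnd ℂ) (Complex.exp ((a:ℂ) * Complex.I * φ))
      = Complex.exp (-(a:ℂ) * Complex.I * φ) := by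
  rw [← Complex.exp_conj]
  congr 1
  simp [Complex.conj_I]

lemma mul_conj_exp (a b : ℂ) (φ : ℂ) :
    Complex.exp (a * Complex.I * φ) * Complex.exp (-b * Complex.I * φ)
      = Complex.exp ((a - b) * Complex.I * φ) := by
  rw [← Complex.exp_add]; ring_nf

lemma hexp_key (N : ℕ) (ξ : Fin (N+1) → ℂ) (n m' : Fin (N+1)) (φ : ℝ) :
    (ξ n * Complex.exp (((n:ℕ):ℂ) * Complex.I * φ)) *
      (starRingEnd ℂ) (ξ m' * Complex.exp (((m':ℕ):ℂ) * Complex.I * φ))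
    = (ξ n * (starRingEnd ℂ) (ξ m')) *
      Complex.exp (((((n:ℕ):ℤ) - ((m':ℕ):ℤ) : ℤ) : ℂ) * Complex.I * φ) := by
  rw [map_mul, conj_exp_nat, mul_mul_mul_comm, mul_conj_exp]
  push_cast
  ring_nf

lemma Pfun_mul_conj (N : ℕ) (ξ : Fin (N+1) → ℂ) (φ : ℝ) :
    Pfun N ξ φ * (starRingEnd ℂ) (Pfun N ξ φ)
      = ∑ n : Fin (N+1), ∑ m' : Fin (N+1),
        (ξ n * (starRingEnd ℂ) (ξ m')) *
          Complex.exp (((((n:ℕ):ℤ) - ((m':ℕ):ℤ) : ℤ) : ℂ) * Complex.I * φ) := by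
  unfold Pfun
  rw [map_sum, Finset.sum_mul]
  refine Finset.sum_congr rfl fun n _ => ?_
  rw [Finset.mul_sum]
  exact Finset.sum_congr rfl fun m' _ => hexp_key N ξ n m' φ

/-- The key orthogonality computation: `∫ P conj P = 2π ∑ |ξ|²`. -/
lemma integral_P_mul_conj (N : ℕ) (ξ : Fin (N+1) → ℂ) :
    ∫ φ in (0:ℝ)..(2*π), Pfun N ξ φ * (starRingEnd ℂ) (Pfun N ξ φ)
      = (2*π : ℂ) * ∑ n, (‖ξ n‖ : ℂ) ^ 2 := by
  simp only [Pfun_mul_conj]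
  rw [intervalIntegral.integral_finset_sum]
  swap
  · intro n _
    apply Continuous.intervalIntegrable
    exact continuous_finset_sum _ fun m' _ =>
      continuous_const.mul (Complex.continuous_exp.comp (continuous_const.mul Complex.continuous_ofReal))
  have key : ∀ n : Fin (N+1),
      (∫ φ in (0:ℝ)..(2*π), ∑ m' : Fin (N+1),
        (ξ n * (starRingEnd ℂ) (ξ m')) *
          Complex.exp (((((n:ℕ):ℤ) - ((m':ℕ):ℤ) : ℤ) : ℂ) * Complex.I * φ))
      = (2*π : ℂ) * (‖ξ n‖ : ℂ) ^ 2 := by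
    intro n
    rw [intervalIntegral.integral_finset_sum]
    swap
    · intro m' _
      apply Continuous.intervalIntegrable
      exact continuous_const.mul (Complex.continuous_exp.comp (continuous_const.mul Complex.continuous_ofReal))
    have h1 : ∀ m' : Fin (N+1),
        (∫ φ in (0:ℝ)..(2*π),
          (ξ n * (starRingEnd ℂ) (ξ m')) *
            Complex.exp (((((n:ℕ):ℤ) - ((m':ℕ):ℤ) : ℤ) : ℂ) * Complex.I * φ))
        = (ξ n * (starRingEnd ℂ) (ξ m')) *
            (if (((n:ℕ):ℤ) - ((m':ℕ):ℤ) : ℤ) = 0 then (2*π : ℂ) else 0) := by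
      intro m'
      rw [intervalIntegral.integral_const_mul, toeplitz_ortho]
    simp only [h1]
    rw [Finset.sum_eq_single n]
    · rw [if_pos (sub_self (((n:ℕ):ℤ))), Complex.mul_conj, ← Complex.sq_norm]
      push_cast
      ring
    · intro x _ hx
      rw [if_neg, mul_zero]
      intro h
      have h2 : ((n:ℕ):ℤ) = ((x:ℕ):ℤ) := sub_eq_zero.mp h
      have h3 : (x:ℕ) = (n:ℕ) := by exact_mod_cast h2.symm
      exact hx (Fin.ext h3)
    · intro h; exact absurd (Finset.mem_univ n) h
  simp only [key]
  rw [← Finset.mul_sum]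

theorem toeplitz_form_bounds
    (f : ℝ → ℝ) (hf : Continuous f) (hper : Function.Periodic f (2 * π))
    (m M : ℝ) (hbd : ∀ φ, m ≤ f φ ∧ f φ ≤ M)
    (c : ℤ → ℂ)
    (hc : ∀ k : ℤ, c k = (1 / (2 * (π : ℂ))) *
      ∫ φ in (0 : ℝ)..(2 * π), (f φ : ℂ) * Complex.exp (-(k : ℂ) * Complex.I * φ))
    (N : ℕ) (ξ : Fin (N + 1) → ℂ)
    (hξ : ∑ n, ‖ξ n‖ ^ 2 = 1) :
    m ≤ (∑ m' : Fin (N + 1), ∑ n : Fin (N + 1), c (((m' : ℕ) : ℤ) - ((n : ℕ) : ℤ)) * ξ n * (starRingEnd ℂ) (ξ m')).re ∧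
      (∑ m' : Fin (N + 1), ∑ n : Fin (N + 1), c (((m' : ℕ) : ℤ) - ((n : ℕ) : ℤ)) * ξ n * (starRingEnd ℂ) (ξ m')).re ≤ M ∧
      (∑ m' : Fin (N + 1), ∑ n : Fin (N + 1), c (((m' : ℕ) : ℤ) - ((n : ℕ) : ℤ)) * ξ n * (starRingEnd ℂ) (ξ m')).im = 0 := by
  have hπ : (π : ℂ) ≠ 0 := Complex.ofReal_ne_zero.mpr Real.pi_ne_zero
  set P := Pfun N ξ with hP
  have hPc : Continuous P := Pfun_continuous N ξ
  -- The integrals defining the Fourier coefficients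
  have hJ : ∀ k : ℤ,
      (∫ φ in (0:ℝ)..(2*π), (f φ : ℂ) * Complex.exp (-(k:ℂ) * Complex.I * φ))
        = 2 * (π:ℂ) * c k := by
    intro k
    rw [hc k]
    field_simp
  -- pointwise: f * P * conj P as real
  have hptR : ∀ φ : ℝ, (f φ : ℂ) * (P φ * (starRingEnd ℂ) (P φ))
      = ((f φ * (‖P φ‖)^2 : ℝ) : ℂ) := by
    intro φ
    rw [Complex.mul_conj, ← Complex.sq_norm]
    push_cast
    ring
  -- Step 1: the double sum equals (1/2π) ∫ f · P · conj P
  have hS : (∑ m' : Fin (N + 1), ∑ n : Fin (N + 1),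
        c (((m' : ℕ) : ℤ) - ((n : ℕ) : ℤ)) * ξ n * (starRingEnd ℂ) (ξ m'))
      = (1 / (2 * (π:ℂ))) *
        ∫ φ in (0:ℝ)..(2*π), (f φ : ℂ) * (P φ * (starRingEnd ℂ) (P φ)) := by
    have hInt : (∫ φ in (0:ℝ)..(2*π), (f φ : ℂ) * (P φ * (starRingEnd ℂ) (P φ)))
        = ∑ n : Fin (N+1), ∑ m' : Fin (N+1),
          (ξ n * (starRingEnd ℂ) (ξ m')) *
            (2 * (π:ℂ) * c (((m' : ℕ) : ℤ) - ((n : ℕ) : ℤ))) := by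
      have hpt2 : ∀ φ : ℝ, (f φ : ℂ) * (P φ * (starRingEnd ℂ) (P φ))
          = ∑ n : Fin (N+1), ∑ m' : Fin (N+1),
            (ξ n * (starRingEnd ℂ) (ξ m')) *
              ((f φ : ℂ) * Complex.exp (-(((((m':ℕ):ℤ) - ((n:ℕ):ℤ) : ℤ)):ℂ) * Complex.I * φ)) := by
        intro φ
        rw [hP, Pfun_mul_conj, Finset.mul_sum]
        refine Finset.sum_congr rfl fun n _ => ?_
        rw [Finset.mul_sum]
        refine Finset.sum_congr rfl fun m' _ => ?_
        have : (((((n:ℕ):ℤ) - ((m':ℕ):ℤ) : ℤ)):ℂ) * Complex.I * φ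
            = -(((((m':ℕ):ℤ) - ((n:ℕ):ℤ) : ℤ)):ℂ) * Complex.I * φ := by
          push_cast; ring
        rw [this]; ring
      simp only [hpt2]
      rw [intervalIntegral.integral_finset_sum]
      swap
      · intro n _
        apply Continuous.intervalIntegrable
        exact continuous_finset_sum _ fun m' _ => continuous_const.mul
          ((Complex.continuous_ofReal.comp hf).mul
            (Complex.continuous_exp.comp (continuous_const.mul Complex.continuous_ofReal)))
      refine Finset.sum_congr rfl fun n _ => ?_
      rw [intervalIntegral.integral_finset_sum]
      swap
      · intro m' _
        apply Continuous.intervalIntegrable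
        exact continuous_const.mul
          ((Complex.continuous_ofReal.comp hf).mul
            (Complex.continuous_exp.comp (continuous_const.mul Complex.continuous_ofReal)))
      refine Finset.sum_congr rfl fun m' _ => ?_
      rw [intervalIntegral.integral_const_mul, hJ]
    rw [hInt, Finset.sum_comm]
    rw [Finset.mul_sum]
    refine Finset.sum_congr rfl fun m' _ => ?_
    rw [Finset.mul_sum]
    refine Finset.sum_congr rfl fun n _ => ?_
    field_simp
  -- real integral r0
  set r0 : ℝ := ∫ φ in (0:ℝ)..(2*π), f φ * (‖P φ‖)^2 with hr0
  have hSreal : (∑ m' : Fin (N + 1), ∑ n : Fin (N + 1),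
        c (((m' : ℕ) : ℤ) - ((n : ℕ) : ℤ)) * ξ n * (starRingEnd ℂ) (ξ m'))
      = (((1 / (2 * π)) * r0 : ℝ) : ℂ) := by
    rw [hS]
    have : (∫ φ in (0:ℝ)..(2*π), (f φ : ℂ) * (P φ * (starRingEnd ℂ) (P φ)))
        = ((r0 : ℝ) : ℂ) := by
      simp only [hptR]
      rw [intervalIntegral.integral_ofReal]
    rw [this]
    push_cast
    ring
  -- |P|² integrates to 2π
  have hPint : (∫ φ in (0:ℝ)..(2*π), (‖P φ‖)^2) = 2 * π := by
    have h1 : (∫ φ in (0:ℝ)..(2*π), P φ * (starRingEnd ℂ) (P φ))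
        = ((2 * π : ℝ) : ℂ) := by
      rw [hP, integral_P_mul_conj]
      have : (∑ n, ((‖ξ n‖ : ℂ)) ^ 2) = ((∑ n, (‖ξ n‖)^2 : ℝ) : ℂ) := by
        push_cast; ring
      rw [this, hξ]
      push_cast; ring
    have h2 : (∫ φ in (0:ℝ)..(2*π), P φ * (starRingEnd ℂ) (P φ))
        = (((∫ φ in (0:ℝ)..(2*π), (‖P φ‖)^2) : ℝ) : ℂ) := by
      have h3 : ∀ φ : ℝ, P φ * (starRingEnd ℂ) (P φ)
          = (((‖P φ‖)^2 : ℝ) : ℂ) := by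
        intro φ
        rw [Complex.mul_conj, ← Complex.sq_norm]
      simp only [h3]
      rw [intervalIntegral.integral_ofReal]
    exact Complex.ofReal_injective (h2.symm.trans h1)
  -- integrability facts
  have hint1 : IntervalIntegrable (fun φ => f φ * (‖P φ‖)^2)
      MeasureTheory.volume 0 (2*π) :=
    (hf.mul ((continuous_norm.comp hPc).pow 2)).intervalIntegrable _ _
  have hintm : IntervalIntegrable (fun φ => m * (‖P φ‖)^2)
      MeasureTheory.volume 0 (2*π) :=
    (continuous_const.mul ((continuous_norm.comp hPc).pow 2)).intervalIntegrable _ _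
  have hintM : IntervalIntegrable (fun φ => M * (‖P φ‖)^2)
      MeasureTheory.volume 0 (2*π) :=
    (continuous_const.mul ((continuous_norm.comp hPc).pow 2)).intervalIntegrable _ _
  have h2πpos : (0:ℝ) < 2 * π := by positivity
  -- bounds on r0
  have hlow : m * (2 * π) ≤ r0 := by
    have := intervalIntegral.integral_mono_on (le_of_lt h2πpos) hintm hint1
      (fun x _ => mul_le_mul_of_nonneg_right (hbd x).1 (sq_nonneg _))
    rwa [intervalIntegral.integral_const_mul, hPint] at this
  have hhigh : r0 ≤ M * (2 * π) := by
    have := intervalIntegral.integral_mono_on (le_of_lt h2πpos) hint1 hintM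
      (fun x _ => mul_le_mul_of_nonneg_right (hbd x).2 (sq_nonneg _))
    rwa [intervalIntegral.integral_const_mul, hPint] at this
  have hre : (∑ m' : Fin (N + 1), ∑ n : Fin (N + 1),
        c (((m' : ℕ) : ℤ) - ((n : ℕ) : ℤ)) * ξ n * (starRingEnd ℂ) (ξ m')).re
      = (1 / (2 * π)) * r0 := by rw [hSreal]; simp
  have him : (∑ m' : Fin (N + 1), ∑ n : Fin (N + 1),
        c (((m' : ℕ) : ℤ) - ((n : ℕ) : ℤ)) * ξ n * (starRingEnd ℂ) (ξ m')).im
      = 0 := by rw [hSreal]; simp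
  refine ⟨?_, ?_, him⟩
  · rw [hre]
    have hm : m = (1 / (2 * π)) * (m * (2 * π)) := by field_simp
    rw [hm]
    exact mul_le_mul_of_nonneg_left hlow (by positivity)
  · rw [hre]
    have hM : M = (1 / (2 * π)) * (M * (2 * π)) := by field_simp
    rw [hM]
    exact mul_le_mul_of_nonneg_left hhigh (by positivity)
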